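/- Let p be a prime and x ∈ ℂ_p^* with |x|_p = 1. Then there exists a strictly increasing sequence of positive integers (n_i) such that x^{n_i} → 1 in ℂ_p; i.e. every element of the unit circle U(1) = {x ∈ ℂ_p : |x|_p = 1} lies in G_m(ℂ_p)_f. -/

import Mathlib

/- STATEMENT 12: Every `x ∈ ℂ_p^*` with `|x|_p = 1` lies in `G_m(ℂ_p)_f`: there is a strictly
increasing sequence of positive integers `(n_i)` with `x^(n_i) → 1` in `ℂ_p`.
`ℂ_p` is modelled as a complete algebraically closed nonarchimedean valued field extending
`ℚ_p` isometrically in which the elements algebraic over `ℚ_p` are dense. -/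

theorem statement12 (p : ℕ) [Fact p.Prime] {Cp : Type*}
    [NontriviallyNormedField Cp] [CompleteSpace Cp] [IsAlgClosed Cp] [IsUltrametricDist Cp]
    [CharZero Cp] [Algebra ℚ_[p] Cp]
    (hiso : ∀ x : ℚ_[p], ‖algebraMap ℚ_[p] Cp x‖ = ‖x‖)
    (hdense : Dense {x : Cp | IsAlgebraic ℚ_[p] x})
    (x : Cp) (hx : ‖x‖ = 1) :
    ∃ n : ℕ → ℕ, StrictMono n ∧ 0 < n 0 ∧
      Filter.Tendsto (fun i => x ^ n i) Filter.atTop (nhds 1) := by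
  classical
  -- `Cp` is a normed `ℚ_p`-vector space.
  letI hns : NormedSpace ℚ_[p] Cp :=
    ⟨fun c v => by rw [Algebra.smul_def, norm_mul, hiso]⟩
  -- auxiliary: for elements of norm at most 1, `‖a^n - b^n‖ ≤ ‖a - b‖`.
  have pow_sub_bound : ∀ a b : Cp, ‖a‖ ≤ 1 → ‖b‖ ≤ 1 → ∀ n : ℕ,
      ‖a ^ n - b ^ n‖ ≤ ‖a - b‖ := by
    intro a b ha hb n
    rw [← geom_sum₂_mul a b n, norm_mul]
    have hsum : ‖∑ i ∈ Finset.range n, a ^ i * b ^ (n - 1 - i)‖ ≤ 1 := by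
      apply IsUltrametricDist.norm_sum_le_of_forall_le_of_nonneg zero_le_one
      intro i _
      rw [norm_mul, norm_pow, norm_pow]
      exact mul_le_one₀ (pow_le_one₀ (norm_nonneg a) ha)
        (pow_nonneg (norm_nonneg b) _) (pow_le_one₀ (norm_nonneg b) hb)
    calc ‖∑ i ∈ Finset.range n, a ^ i * b ^ (n - 1 - i)‖ * ‖a - b‖
        ≤ 1 * ‖a - b‖ := mul_le_mul_of_nonneg_right hsum (norm_nonneg _)
      _ = ‖a - b‖ := one_mul _
  -- key claim: for any `ε > 0` there are arbitrarily large `n` with `‖x^n - 1‖ < ε`.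
  have key : ∀ ε : ℝ, 0 < ε → ∀ N : ℕ, ∃ n : ℕ, N < n ∧ ‖x ^ n - 1‖ < ε := by
    intro ε hε N
    set δ : ℝ := min ε 1 with hδdef
    have hδ : 0 < δ := lt_min hε one_pos
    have hδ1 : δ ≤ 1 := min_le_right _ _
    have hδε : δ ≤ ε := min_le_left _ _
    -- pick an algebraic `y` close to `x`
    obtain ⟨y, hyalg, hxy⟩ := hdense.exists_dist_lt x hδ
    rw [dist_eq_norm] at hxy
    have hxyle : ‖x - y‖ < 1 := lt_of_lt_of_le hxy hδ1
    -- `‖y‖ = 1`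
    have hy1 : ‖y‖ = 1 := by
      have h1 : ‖y‖ ≤ 1 := by
        have : ‖y‖ = ‖x + -(x - y)‖ := by ring_nf
        rw [this]
        refine le_trans (IsUltrametricDist.norm_add_le_max _ _) ?_
        rw [norm_neg, hx]
        exact max_le le_rfl hxyle.le
      have h2 : (1 : ℝ) ≤ ‖y‖ := by
        by_contra hcon
        push_neg at hcon
        have : ‖x‖ ≤ max ‖y‖ ‖x - y‖ := by
          have hrw : x = y + (x - y) := by ring
          nth_rewrite 1 [hrw]
          exact IsUltrametricDist.norm_add_le_max _ _
        rw [hx] at this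
        rcases max_cases ‖y‖ ‖x - y‖ with ⟨heq, _⟩ | ⟨heq, _⟩ <;> rw [heq] at this
        · exact absurd this (not_le.mpr hcon)
        · exact absurd this (not_le.mpr hxyle)
      linarith
    -- `y` generates a finite-dimensional subspace; its powers accumulate somewhere
    have hint : IsIntegral ℚ_[p] y := hyalg.isIntegral
    set S : Submodule ℚ_[p] Cp :=
      Subalgebra.toSubmodule (Algebra.adjoin ℚ_[p] {y}) with hSdef
    haveI : FiniteDimensional ℚ_[p] S :=
      ⟨(Submodule.fg_top _).mpr hint.fg_adjoin_singleton⟩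
    haveI : ProperSpace S := FiniteDimensional.proper ℚ_[p] S
    have hymem : y ∈ Algebra.adjoin ℚ_[p] {y} :=
      Algebra.subset_adjoin (Set.mem_singleton y)
    have hpowmem : ∀ n : ℕ, y ^ n ∈ S := fun n => pow_mem hymem n
    set u : ℕ → S := fun n => ⟨y ^ n, hpowmem n⟩ with hudef
    have hunorm : ∀ n, ‖u n‖ = 1 := by
      intro n
      show ‖y ^ n‖ = 1
      rw [norm_pow, hy1, one_pow]
    have humem : ∀ n, u n ∈ Metric.closedBall (0 : S) 1 := by
      intro n
      rw [Metric.mem_closedBall, dist_zero_right, hunorm n]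
    obtain ⟨a, -, φ, hφ, hconv⟩ :=
      tendsto_subseq_of_bounded Metric.isBounded_closedBall humem
    have hc : CauchySeq (u ∘ φ) := hconv.cauchySeq
    obtain ⟨M, hM⟩ := Metric.cauchySeq_iff.mp hc δ hδ
    have hφlt : φ M < φ (M + 1) := hφ (Nat.lt_succ_self M)
    set n₀ : ℕ := φ (M + 1) - φ M with hn₀def
    have hn₀pos : 0 < n₀ := Nat.sub_pos_of_lt hφlt
    have hdist : dist (u (φ (M + 1))) (u (φ M)) < δ :=
      hM (M + 1) (Nat.le_succ M) M le_rfl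
    have hdist' : ‖y ^ φ (M + 1) - y ^ φ M‖ < δ := by
      rwa [Subtype.dist_eq, dist_eq_norm] at hdist
    have hyn₀ : ‖y ^ n₀ - 1‖ < δ := by
      have hfac : y ^ φ M * (y ^ n₀ - 1) = y ^ φ (M + 1) - y ^ φ M := by
        rw [mul_sub, mul_one, ← pow_add]
        congr 2
        omega
      have : ‖y ^ φ M * (y ^ n₀ - 1)‖ < δ := by rw [hfac]; exact hdist'
      rwa [norm_mul, norm_pow, hy1, one_pow, one_mul] at this
    -- transfer to `x`
    have hxn₀ : ‖x ^ n₀ - 1‖ < δ := by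
      have hsplit : x ^ n₀ - 1 = (x ^ n₀ - y ^ n₀) + (y ^ n₀ - 1) := by ring
      rw [hsplit]
      refine lt_of_le_of_lt (IsUltrametricDist.norm_add_le_max _ _) (max_lt ?_ hyn₀)
      exact lt_of_le_of_lt (pow_sub_bound x y hx.le hy1.le n₀) hxy
    -- take a large multiple of `n₀`
    refine ⟨(N + 1) * n₀, ?_, ?_⟩
    · calc N < N + 1 := Nat.lt_succ_self N
        _ = (N + 1) * 1 := (mul_one _).symm
        _ ≤ (N + 1) * n₀ := Nat.mul_le_mul_left _ hn₀pos
    · have hxpow : ‖x ^ n₀‖ ≤ 1 := by rw [norm_pow, hx, one_pow]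
      have := pow_sub_bound (x ^ n₀) 1 hxpow (by rw [norm_one]) (N + 1)
      rw [one_pow, ← pow_mul] at this
      rw [Nat.mul_comm]
      calc ‖x ^ (n₀ * (N + 1)) - 1‖ ≤ ‖x ^ n₀ - 1‖ := this
        _ < δ := hxn₀
        _ ≤ ε := hδε
  -- build the strictly increasing sequence
  have key' : ∀ i N : ℕ, ∃ n : ℕ, N < n ∧ ‖x ^ n - 1‖ < 1 / (i + 1) := by
    intro i N
    exact key (1 / (i + 1)) (by positivity) N
  choose F hF1 hF2 using key'
  set n : ℕ → ℕ := fun i => Nat.rec (F 0 0) (fun i ih => F (i + 1) ih) i with hndef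
  have hn0 : n 0 = F 0 0 := rfl
  have hnsucc : ∀ i, n (i + 1) = F (i + 1) (n i) := fun i => rfl
  have hmono : StrictMono n := by
    apply strictMono_nat_of_lt_succ
    intro i
    rw [hnsucc i]
    exact hF1 (i + 1) (n i)
  have hbound : ∀ i, ‖x ^ n i - 1‖ < 1 / (i + 1) := by
    intro i
    cases i with
    | zero => rw [hn0]; exact_mod_cast hF2 0 0
    | succ j => rw [hnsucc j]; exact hF2 (j + 1) (n j)
  refine ⟨n, hmono, ?_, ?_⟩
  · rw [hn0]; exact hF1 0 0
  · rw [tendsto_iff_norm_sub_tendsto_zero]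
    apply squeeze_zero (fun i => norm_nonneg _) (fun i => (hbound i).le)
    exact_mod_cast tendsto_one_div_add_atTop_nhds_zero_nat (𝕜 := ℝ)
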